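/- Let S and R be finite sets, N a real S×R matrix, c̄ ∈ ℝ^S strictly positive, k ∈ ℝ^R with nonnegative entries, and let A = −diag(c̄)⁻¹ · N · diag(k) · Nᵀ. Then there exists a real S×S matrix L such that e^{tA} converges (entrywise) to L as t → +∞. -/

import Mathlib

open Matrix NormedSpace

/-- For `A = −diag(c̄)⁻¹ N diag(k) Nᵀ` with `c̄ > 0` and `k ≥ 0`, the matrix exponential
`e^{tA}` converges (entrywise, i.e. in the product topology on matrices) to some matrix `L`
as `t → +∞`. -/
theorem exp_tendsto_limit
    {S R : Type*} [Fintype S] [Fintype R] [DecidableEq S] [DecidableEq R]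
    (N : Matrix S R ℝ) (cbar : S → ℝ) (k : R → ℝ)
    (hcbar : ∀ s, 0 < cbar s) (hk : ∀ r, 0 ≤ k r)
    (A : Matrix S S ℝ)
    (hA : A = -(Matrix.diagonal (fun s => (cbar s)⁻¹) * N * Matrix.diagonal k * Nᵀ)) :
    ∃ L : Matrix S S ℝ,
      Filter.Tendsto (fun t : ℝ => exp (t • A)) Filter.atTop (nhds L) := by
  classical
  set d : S → ℝ := fun s => Real.sqrt (cbar s) with hd
  have hd0 : ∀ s, 0 < d s := fun s => Real.sqrt_pos.2 (hcbar s)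
  set Q : Matrix S S ℝ := Matrix.diagonal (fun s => (d s)⁻¹) with hQdef
  set P : Matrix S S ℝ := Matrix.diagonal d with hPdef
  have hQP : Q * P = 1 := by
    rw [hQdef, hPdef, Matrix.diagonal_mul_diagonal,
      show (fun i => (d i)⁻¹ * d i) = fun _ => (1 : ℝ) from
        funext fun s => inv_mul_cancel₀ (hd0 s).ne', Matrix.diagonal_one]
  have hPQ : P * Q = 1 := by
    rw [hPdef, hQdef, Matrix.diagonal_mul_diagonal,
      show (fun i => d i * (d i)⁻¹) = fun _ => (1 : ℝ) from
        funext fun s => mul_inv_cancel₀ (hd0 s).ne', Matrix.diagonal_one]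
  set M : Matrix S S ℝ := N * Matrix.diagonal k * Nᵀ with hMdef
  have hMps : M.PosSemidef := by
    have hkps : (Matrix.diagonal k).PosSemidef := Matrix.posSemidef_diagonal_iff.2 hk
    have := hkps.mul_mul_conjTranspose_same N
    rwa [Matrix.conjTranspose_eq_transpose_of_trivial] at this
  set B : Matrix S S ℝ := Q * M * Q with hBdef
  have hQh : Qᴴ = Q := by
    rw [hQdef, Matrix.diagonal_conjTranspose]; congr 1
  have hBps : B.PosSemidef := by
    have := hMps.mul_mul_conjTranspose_same Q
    rwa [hQh] at this
  have hB : B.IsHermitian := hBps.isHermitian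
  set μ : S → ℝ := hB.eigenvalues with hμdef
  set V : Matrix S S ℝ := (Matrix.IsHermitian.eigenvectorUnitary hB : Matrix S S ℝ) with hVdef
  have hspec : B = V * Matrix.diagonal μ * star V := by
    have := hB.spectral_theorem
    simpa [RCLike.ofReal_real_eq_id] using this
  have hV1 : V * star V = 1 :=
    Matrix.mem_unitaryGroup_iff.mp (Matrix.IsHermitian.eigenvectorUnitary hB).2
  have hV2 : star V * V = 1 :=
    Matrix.mem_unitaryGroup_iff'.mp (Matrix.IsHermitian.eigenvectorUnitary hB).2
  -- A = Q * (-B) * P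
  have hQQ : Q * Q = Matrix.diagonal (fun s => (cbar s)⁻¹) := by
    rw [hQdef, Matrix.diagonal_mul_diagonal,
      show (fun i => (d i)⁻¹ * (d i)⁻¹) = fun s => (cbar s)⁻¹ from funext fun s => by
        rw [← mul_inv, Real.mul_self_sqrt (hcbar s).le]]
  have hAeq : A = Q * (-B) * P := by
    have h1 : Q * B * P = Matrix.diagonal (fun s => (cbar s)⁻¹) * M := by
      rw [hBdef]
      calc Q * (Q * M * Q) * P = (Q * Q) * M * (Q * P) := by
            simp only [Matrix.mul_assoc]
        _ = Matrix.diagonal (fun s => (cbar s)⁻¹) * M := by rw [hQQ, hQP, mul_one]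
    rw [hA, Matrix.mul_neg, Matrix.neg_mul, h1, hMdef]
    simp only [Matrix.mul_assoc]
  -- units
  set U₁ : (Matrix S S ℝ)ˣ := ⟨Q, P, hQP, hPQ⟩ with hU₁
  set U₂ : (Matrix S S ℝ)ˣ := ⟨V, star V, hV1, hV2⟩ with hU₂
  -- key formula
  have key : ∀ t : ℝ,
      exp (t • A) =
        Q * (V * Matrix.diagonal (fun i => Real.exp (-(t * μ i))) * star V) * P := by
    intro t
    have hsm : t • A = Q * (V * Matrix.diagonal (fun i => -(t * μ i)) * star V) * P := by
      have hdiag : Matrix.diagonal (fun i => -(t * μ i)) = t • (-(Matrix.diagonal μ)) := by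
        ext i j
        by_cases h : i = j <;> simp [Matrix.diagonal_apply, h]
      rw [hdiag, hAeq, hspec]
      simp only [Matrix.mul_neg, Matrix.neg_mul, smul_neg, Matrix.smul_mul, Matrix.mul_smul]
    have e1 : exp (Q * (V * Matrix.diagonal (fun i => -(t * μ i)) * star V) * P)
        = Q * exp (V * Matrix.diagonal (fun i => -(t * μ i)) * star V) * P :=
      Matrix.exp_units_conj U₁ _
    have e2 : exp (V * Matrix.diagonal (fun i => -(t * μ i)) * star V)
        = V * exp (Matrix.diagonal (fun i => -(t * μ i))) * star V :=
      Matrix.exp_units_conj U₂ _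
    rw [hsm, e1, e2, Matrix.exp_diagonal]
    congr 1
    congr 2
    rw [Pi.exp_def]
    funext i
    rw [← Real.exp_eq_exp_ℝ]
  -- the limit matrix
  set g : S → ℝ := fun i => if μ i = 0 then 1 else 0 with hgdef
  refine ⟨Q * (V * Matrix.diagonal g * star V) * P, ?_⟩
  have hcont : Continuous fun v : S → ℝ => Q * (V * Matrix.diagonal v * star V) * P :=
    ((continuous_const.matrix_mul
      ((continuous_const.matrix_mul continuous_id.matrix_diagonal).matrix_mul
        continuous_const)).matrix_mul continuous_const)
  have hvec : Filter.Tendsto (fun t : ℝ => fun i => Real.exp (-(t * μ i)))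
      Filter.atTop (nhds g) := by
    rw [tendsto_pi_nhds]
    intro i
    by_cases hzero : μ i = 0
    · simp only [hgdef, hzero, if_pos, mul_zero, neg_zero, Real.exp_zero]
      exact tendsto_const_nhds
    · have hpos : 0 < μ i := lt_of_le_of_ne (hBps.eigenvalues_nonneg i) (Ne.symm hzero)
      have h1 : Filter.Tendsto (fun t : ℝ => t * μ i) Filter.atTop Filter.atTop :=
        Filter.Tendsto.atTop_mul_const hpos Filter.tendsto_id
      have h2 : Filter.Tendsto (fun t : ℝ => -(t * μ i)) Filter.atTop Filter.atBot :=
        Filter.tendsto_neg_atBot_iff.mpr h1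
      have hgi : g i = 0 := if_neg hzero
      rw [hgi]
      exact Real.tendsto_exp_atBot.comp h2
  have := (hcont.tendsto g).comp hvec
  refine this.congr fun t => ?_
  exact (key t).symm
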